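/- Let A = kQ/I be a monomial algebra and (p, q) a perfect pair. Then the natural map θ_q : qA → Hom_A(Aq, A), θ_q(qx)(y) = yx, is an isomorphism of right A-modules. -/

import Mathlib

universe u v w

/-- A presentation of the `k`-algebra `A` as a monomial algebra `kQ/I` on the quiver
with vertex type `V`: `ι` sends each path of `Q` to its canonical image in `A`
(with `ι (p.comp q) = ι q * ι p`, so that the paper's concatenation `pq`, defined when
`s(p) = t(q)`, corresponds to the product `ι p * ι q`), and `Z p` means `p ∈ I`. -/
structure MonomialPresentation (k : Type u) (A : Type v) (V : Type w)
    [Field k] [Ring A] [Algebra k A] [Quiver.{w} V] [Fintype V] : Type (max u v w) where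
  ι : ∀ {i j : V}, Quiver.Path i j → A
  Z : ∀ {i j : V}, Quiver.Path i j → Prop
  zero_iff : ∀ {i j : V} (p : Quiver.Path i j), ι p = 0 ↔ Z p
  mul_comp : ∀ {i j l : V} (p : Quiver.Path i j) (q : Quiver.Path j l),
    ι (p.comp q) = ι q * ι p
  orth : ∀ i j : V, i ≠ j →
    ι (Quiver.Path.nil : Quiver.Path i i) * ι (Quiver.Path.nil : Quiver.Path j j) = 0
  sum_one : (∑ i : V, ι (Quiver.Path.nil : Quiver.Path i i)) = 1
  len_two : ∀ {i j : V} (p : Quiver.Path i j), Z p → 2 ≤ p.length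
  admissible : ∃ d : ℕ, ∀ {i j : V} (p : Quiver.Path i j), d ≤ p.length → Z p
  z_mul : ∀ {i j l : V} (p : Quiver.Path i j) (q : Quiver.Path j l),
    Z p ∨ Z q → Z (p.comp q)
  indep : LinearIndependent k
    (fun x : {y : Σ i j : V, Quiver.Path i j // ¬ Z y.2.2} => ι x.1.2.2)
  span_top : Submodule.span k
    (Set.range (fun x : Σ i j : V, Quiver.Path i j => ι x.2.2)) = ⊤

/-- The type of paths of a quiver, bundled with their endpoints. -/
abbrev PathIn (V : Type w) [Quiver.{w} V] : Type w := Σ i j : V, Quiver.Path i j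

/-- The type of arrows of a quiver, bundled with their endpoints. -/
abbrev ArrowIn (V : Type w) [Quiver.{w} V] : Type w := Σ i j : V, (i ⟶ j)

/-- `x` is a sub-path of `y`. -/
def IsSubpathIn {V : Type w} [Quiver.{w} V] (x y : PathIn V) : Prop :=
  ∃ (r : Quiver.Path y.1 x.1) (s : Quiver.Path x.2.1 y.2.1),
    y.2.2 = (r.comp x.2.2).comp s

namespace MonomialPresentation

variable {k : Type u} {A : Type v} {V : Type w}
  [Field k] [Ring A] [Algebra k A] [Quiver.{w} V] [Fintype V]
  (P : MonomialPresentation k A V)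

/-- `L(p)`: the right-minimal paths `q` among the nonzero paths with
`s(q) = t(p)` and `qp = 0` in `A`. -/
def LSet {i j : V} (p : Quiver.Path i j) : Set (PathIn V) :=
  {q | ¬ P.Z q.2.2 ∧ q.1 = j ∧ P.ι q.2.2 * P.ι p = 0 ∧
    ¬ ∃ r u : PathIn V, ¬ P.Z r.2.2 ∧ r.1 = j ∧ P.ι r.2.2 * P.ι p = 0 ∧
      1 ≤ u.2.2.length ∧ P.ι q.2.2 = P.ι u.2.2 * P.ι r.2.2}

/-- `R(p)`: the left-minimal paths `q` among the nonzero paths with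
`t(q) = s(p)` and `pq = 0` in `A`. -/
def RSet {i j : V} (p : Quiver.Path i j) : Set (PathIn V) :=
  {q | ¬ P.Z q.2.2 ∧ q.2.1 = i ∧ P.ι p * P.ι q.2.2 = 0 ∧
    ¬ ∃ r u : PathIn V, ¬ P.Z r.2.2 ∧ r.2.1 = i ∧ P.ι p * P.ι r.2.2 = 0 ∧
      1 ≤ u.2.2.length ∧ P.ι q.2.2 = P.ι r.2.2 * P.ι u.2.2}

/-- A perfect pair `(p, q)` of nonzero nontrivial paths with `s(p) = t(q)`:
`pq = 0`, `R(p) = {q}` and `L(q) = {p}`. -/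
def PerfectPair {i j l : V} (p : Quiver.Path i j) (q : Quiver.Path l i) : Prop :=
  1 ≤ p.length ∧ 1 ≤ q.length ∧ ¬ P.Z p ∧ ¬ P.Z q ∧ P.Z (q.comp p) ∧
  (∀ (m : V) (q' : Quiver.Path m i), ¬ P.Z q' → P.Z (q'.comp p) →
    ∃ x : Quiver.Path m l, q' = x.comp q) ∧
  (∀ (m : V) (p' : Quiver.Path i m), ¬ P.Z p' → P.Z (q.comp p') →
    ∃ y : Quiver.Path j m, p' = p.comp y)

/-- The perfect pair relation on bundled paths. -/
def PerfectPairS (x y : PathIn V) : Prop :=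
  ∃ (i j l : V) (p : Quiver.Path i j) (q : Quiver.Path l i),
    x = ⟨i, j, p⟩ ∧ y = ⟨l, i, q⟩ ∧ P.PerfectPair p q

/-- A perfect path: a nonzero path `p` admitting a sequence
`p = p₁, p₂, …, pₙ, pₙ₊₁ = p` in which all consecutive pairs are perfect. -/
def IsPerfectPath (x : PathIn V) : Prop :=
  ∃ (n : ℕ) (c : Fin (n + 2) → PathIn V), c 0 = x ∧ c (Fin.last (n + 1)) = x ∧
    ∀ m : Fin (n + 1), P.PerfectPairS (c m.castSucc) (c m.succ)

/-- `x ∈ F`: `x` is a minimal path contained in the ideal `I`. -/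
def InF (x : PathIn V) : Prop :=
  P.Z x.2.2 ∧ ∀ y : PathIn V, IsSubpathIn y x → y ≠ x → ¬ P.Z y.2.2

/-- The algebra is quadratic monomial: all minimal relations have length two. -/
def Quadratic : Prop := ∀ x : PathIn V, P.InF x → x.2.2.length = 2

/-- The arrow relation of the relation quiver `R_A`: there is an arrow
`α → β` when `t(α) = s(β)` and `βα ∈ F`. -/
def RQ (x y : ArrowIn V) : Prop :=
  ∃ (i j l : V) (α : i ⟶ j) (β : j ⟶ l), x = ⟨i, j, α⟩ ∧ y = ⟨j, l, β⟩ ∧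
    P.InF ⟨i, l, (α.toPath).comp β.toPath⟩

/-- The two vertices of the relation quiver lie in the same connected component. -/
def Conn (x y : ArrowIn V) : Prop :=
  Relation.ReflTransGen (fun a b => P.RQ a b ∨ P.RQ b a) x y

/-- The connected component of `x` in the relation quiver is a basic cycle:
every vertex of the component has a unique successor and a unique predecessor. -/
def InPerfectComponent (x : ArrowIn V) : Prop :=
  ∀ y : ArrowIn V, P.Conn x y → (∃! z, P.RQ y z) ∧ (∃! z, P.RQ z y)

/-- The connected component of `x` in the relation quiver contains no oriented cycle. -/
def InAcyclicComponent (x : ArrowIn V) : Prop :=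
  ∀ y : ArrowIn V, P.Conn x y → ¬ Relation.TransGen P.RQ y y

end MonomialPresentation

/-- The quiver is a basic `n`-cycle. -/
def IsBasicCycleQuiver (V : Type w) [Quiver.{w} V] : Prop :=
  ∃ n : ℕ, 0 < n ∧ ∃ f : V ≃ ZMod n,
    (∀ i j : V, Nonempty (i ⟶ j) ↔ f j = f i + 1) ∧
    (∀ (i j : V) (a b : i ⟶ j), a = b)

/-- The underlying graph of the quiver is connected. -/
def QuiverConnected (V : Type w) [Quiver.{w} V] : Prop :=
  Nonempty V ∧ ∀ i j : V,
    Relation.ReflTransGen (fun a b => Nonempty (a ⟶ b) ∨ Nonempty (b ⟶ a)) i j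

/-- The quiver has no sources. -/
def NoSources (V : Type w) [Quiver.{w} V] : Prop := ∀ j : V, ∃ i : V, Nonempty (i ⟶ j)

/-- The quiver has no sinks. -/
def NoSinks (V : Type w) [Quiver.{w} V] : Prop := ∀ i : V, ∃ j : V, Nonempty (i ⟶ j)

namespace MonomialPresentation

variable {k : Type u} {A : Type v} {V : Type w}
  [Field k] [Ring A] [Algebra k A] [Quiver.{w} V] [Fintype V]
  (P : MonomialPresentation k A V)

lemma e_mul {m j' : V} (γ : Quiver.Path m j') :
    P.ι (Quiver.Path.nil : Quiver.Path j' j') * P.ι γ = P.ι γ := by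
  have := P.mul_comp γ (Quiver.Path.nil : Quiver.Path j' j')
  rw [Quiver.Path.comp_nil] at this
  exact this.symm

lemma e_mul' {i m j' : V} (γ : Quiver.Path m j') (hj : j' = i) :
    P.ι (Quiver.Path.nil : Quiver.Path i i) * P.ι γ = P.ι γ := by
  subst hj; exact P.e_mul γ

lemma e_mul_ne {i m j' : V} (hne : i ≠ j') (γ : Quiver.Path m j') :
    P.ι (Quiver.Path.nil : Quiver.Path i i) * P.ι γ = 0 := by
  rw [← P.e_mul γ, ← mul_assoc, P.orth i j' hne, zero_mul]

end MonomialPresentation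

namespace MonomialPresentation

variable {k : Type u} {A : Type v} {V : Type w}
  [Field k] [Ring A] [Algebra k A] [Quiver.{w} V] [Fintype V]
  (P : MonomialPresentation k A V)

omit [Fintype V] in
lemma pathin_inj {m₁ m₀ t : V} {ρ₁ : Quiver.Path m₁ t} {ρ₀ : Quiver.Path m₀ t}
    (h : (⟨m₁, t, ρ₁⟩ : PathIn V) = ⟨m₀, t, ρ₀⟩) : m₁ = m₀ ∧ HEq ρ₁ ρ₀ := by
  obtain ⟨h1, h2⟩ := Sigma.mk.inj_iff.1 h
  subst h1
  obtain ⟨h3, h4⟩ := Sigma.mk.inj_iff.1 (eq_of_heq h2)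
  exact ⟨rfl, h4⟩

lemma factor {i j l : V} {p : Quiver.Path i j} {q : Quiver.Path l i}
    (h6 : ∀ (m : V) (q' : Quiver.Path m i), ¬ P.Z q' → P.Z (q'.comp p) →
      ∃ x : Quiver.Path m l, q' = x.comp q)
    {m j' : V} (γ : Quiver.Path m j') (hj : j' = i) (hγ : ¬ P.Z γ)
    (h0 : P.ι p * P.ι γ = 0) :
    P.ι γ ∈ Submodule.span Aᵐᵒᵖ ({P.ι q} : Set A) := by
  subst hj
  have hz : P.Z (γ.comp p) := (P.zero_iff _).1 (by rw [P.mul_comp]; exact h0)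
  obtain ⟨x, rfl⟩ := h6 m γ hγ hz
  rw [P.mul_comp]
  exact Submodule.mem_span_singleton.2 ⟨MulOpposite.op (P.ι x), rfl⟩

lemma key {i j l : V} (p : Quiver.Path i j) (q : Quiver.Path l i)
    (h6 : ∀ (m : V) (q' : Quiver.Path m i), ¬ P.Z q' → P.Z (q'.comp p) →
      ∃ x : Quiver.Path m l, q' = x.comp q)
    (c : A) (hce : P.ι (Quiver.Path.nil : Quiver.Path i i) * c = c)
    (hcp : P.ι p * c = 0) :
    c ∈ Submodule.span Aᵐᵒᵖ ({P.ι q} : Set A) := by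
  classical
  set S := {y : PathIn V // ¬ P.Z y.2.2} with hS
  have hspan : ⊤ ≤ Submodule.span k (Set.range fun x : S => P.ι x.1.2.2) := by
    rw [← P.span_top]
    apply Submodule.span_le.2
    rintro _ ⟨x, rfl⟩
    dsimp only
    by_cases hx : P.Z x.2.2
    · rw [(P.zero_iff _).2 hx]; exact zero_mem _
    · exact Submodule.subset_span ⟨⟨x, hx⟩, rfl⟩
  let b : Module.Basis S k A := Module.Basis.mk P.indep hspan
  have hb : ∀ s : S, b s = P.ι s.1.2.2 := fun s => Module.Basis.mk_apply P.indep hspan s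
  set r : S →₀ k := b.repr c with hr
  have hc_sum : c = ∑ γ ∈ r.support, r γ • P.ι γ.1.2.2 := by
    conv_lhs => rw [← b.linearCombination_repr c]
    rw [Finsupp.linearCombination_apply, Finsupp.sum]
    exact Finset.sum_congr rfl (fun γ _ => by rw [hb])
  -- Step A : every path in the support ends at i
  have stepA : ∀ γ ∈ r.support, γ.1.2.1 = i := by
    intro γ₀ hγ₀
    by_contra hti
    apply Finsupp.mem_support_iff.1 hγ₀
    suffices h : (b.repr (P.ι (Quiver.Path.nil : Quiver.Path i i) * c)) γ₀ = 0 by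
      rw [hce, ← hr] at h; exact h
    have hsum : P.ι (Quiver.Path.nil : Quiver.Path i i) * c
        = ∑ γ ∈ r.support, r γ • (P.ι (Quiver.Path.nil : Quiver.Path i i) * P.ι γ.1.2.2) := by
      conv_lhs => rw [hc_sum]
      rw [Finset.mul_sum]
      exact Finset.sum_congr rfl (fun γ _ => mul_smul_comm _ _ _)
    rw [hsum, map_sum, Finsupp.finset_sum_apply]
    apply Finset.sum_eq_zero
    intro γ hγ
    rw [map_smul, Finsupp.smul_apply]
    by_cases hti' : γ.1.2.1 = i
    · rw [P.e_mul' _ hti', ← hb, b.repr_self, Finsupp.single_apply, if_neg, smul_zero]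
      intro he; apply hti; rw [← he]; exact hti'
    · rw [P.e_mul_ne (fun hh => hti' hh.symm), map_zero, Finsupp.zero_apply, smul_zero]
  -- Step B : for every path γ in the support, p * γ = 0 in A
  have stepB : ∀ γ ∈ r.support, P.ι p * P.ι γ.1.2.2 = 0 := by
    intro γ₀ hγ₀
    by_contra hcon
    obtain ⟨⟨m₀, t₀, ρ₀⟩, hz₀⟩ := γ₀
    have ht₀ : t₀ = i := stepA _ hγ₀
    subst t₀
    have hcon' : P.ι p * P.ι ρ₀ ≠ 0 := hcon
    have hδz : ¬ P.Z (ρ₀.comp p) := fun hh =>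
      hcon' (by rw [← P.mul_comp]; exact (P.zero_iff _).2 hh)
    set δ : S := ⟨⟨m₀, j, ρ₀.comp p⟩, hδz⟩ with hδ
    have h0 : (b.repr (P.ι p * c)) δ = 0 := by
      rw [hcp, map_zero]; exact Finsupp.zero_apply
    have hpc : P.ι p * c = ∑ γ ∈ r.support, r γ • (P.ι p * P.ι γ.1.2.2) := by
      conv_lhs => rw [hc_sum]
      rw [Finset.mul_sum]
      exact Finset.sum_congr rfl (fun γ _ => mul_smul_comm _ _ _)
    have h1 : (b.repr (P.ι p * c)) δ
        = ∑ γ ∈ r.support, r γ • ((b.repr (P.ι p * P.ι γ.1.2.2)) δ) := by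
      rw [hpc, map_sum, Finsupp.finset_sum_apply]
      exact Finset.sum_congr rfl (fun γ _ => by rw [map_smul, Finsupp.smul_apply])
    have h2 : ∀ γ ∈ r.support, r γ • ((b.repr (P.ι p * P.ι γ.1.2.2)) δ)
        = if γ = (⟨⟨m₀, i, ρ₀⟩, hz₀⟩ : S) then r γ else 0 := by
      intro γ hγ
      obtain ⟨⟨m₁, t₁, ρ₁⟩, hz₁⟩ := γ
      have ht₁ : t₁ = i := stepA _ hγ
      subst t₁
      by_cases hγz : P.Z (ρ₁.comp p)
      · have hz' : P.ι p * P.ι ρ₁ = 0 := by rw [← P.mul_comp]; exact (P.zero_iff _).2 hγz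
        rw [show P.ι p * P.ι ((⟨⟨m₁, i, ρ₁⟩, hz₁⟩ : S).1.2.2) = 0 from hz',
          map_zero, Finsupp.zero_apply, smul_zero, if_neg]
        intro heq
        apply hcon'
        have hv : (⟨m₁, i, ρ₁⟩ : PathIn V) = ⟨m₀, i, ρ₀⟩ := Subtype.ext_iff.1 heq
        obtain ⟨hm, hheq⟩ := pathin_inj hv
        subst hm
        rw [← eq_of_heq hheq]; exact hz'
      · have hδ₁ : P.ι p * P.ι ((⟨⟨m₁, i, ρ₁⟩, hz₁⟩ : S).1.2.2)
            = b (⟨⟨m₁, j, ρ₁.comp p⟩, hγz⟩ : S) := by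
          rw [hb, ← P.mul_comp]
        rw [hδ₁, b.repr_self, Finsupp.single_apply]
        have hiff : ((⟨⟨m₁, j, ρ₁.comp p⟩, hγz⟩ : S) = δ)
            ↔ ((⟨⟨m₁, i, ρ₁⟩, hz₁⟩ : S) = (⟨⟨m₀, i, ρ₀⟩, hz₀⟩ : S)) := by
          constructor
          · intro he
            have hv : (⟨m₁, j, ρ₁.comp p⟩ : PathIn V) = ⟨m₀, j, ρ₀.comp p⟩ :=
              Subtype.ext_iff.1 he
            obtain ⟨hm, hheq⟩ := pathin_inj hv
            subst hm
            have hρ : ρ₁ = ρ₀ := Quiver.Path.comp_injective_left p (eq_of_heq hheq)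
            subst hρ
            rfl
          · intro he
            have hv : (⟨m₁, i, ρ₁⟩ : PathIn V) = ⟨m₀, i, ρ₀⟩ := Subtype.ext_iff.1 he
            obtain ⟨hm, hheq⟩ := pathin_inj hv
            subst hm
            have hρ : ρ₁ = ρ₀ := eq_of_heq hheq
            subst hρ
            rfl
        by_cases he : (⟨⟨m₁, i, ρ₁⟩, hz₁⟩ : S) = (⟨⟨m₀, i, ρ₀⟩, hz₀⟩ : S)
        · rw [if_pos (hiff.2 he), if_pos he, smul_eq_mul, mul_one]
        · rw [if_neg (fun hh => he (hiff.1 hh)), if_neg he, smul_zero]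
    have h3 : (0:k) = r (⟨⟨m₀, i, ρ₀⟩, hz₀⟩ : S) := by
      rw [← h0, h1, Finset.sum_congr rfl h2, Finset.sum_ite_eq' r.support _ r, if_pos hγ₀]
    exact Finsupp.mem_support_iff.1 hγ₀ h3.symm
  -- conclude
  have hsmul : ∀ (s : k) (x : A), x ∈ Submodule.span Aᵐᵒᵖ ({P.ι q} : Set A) →
      s • x ∈ Submodule.span Aᵐᵒᵖ ({P.ι q} : Set A) := by
    intro s x hx
    obtain ⟨a, rfl⟩ := Submodule.mem_span_singleton.1 hx
    have heq : s • (a • P.ι q) = (MulOpposite.op (s • a.unop)) • P.ι q := by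
      show s • (P.ι q * a.unop) = P.ι q * (s • a.unop)
      rw [mul_smul_comm]
    rw [heq]
    exact Submodule.smul_mem _ _ (Submodule.mem_span_singleton_self _)
  rw [hc_sum]
  refine Submodule.sum_mem _ (fun γ hγ => ?_)
  exact hsmul _ _ (P.factor h6 γ.1.2.2 (stepA γ hγ) γ.2 (stepB γ hγ))

end MonomialPresentation

open MonomialPresentation in
/-- Lemma 3.6: for a perfect pair `(p, q)` the map `θ_q : qA → Hom_A(Aq, A)`,
`θ_q(qx)(y) = yx`, is an isomorphism of right `A`-modules. -/
theorem theta_iso_of_perfect_pair (k : Type u) (A : Type v) (V : Type w)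
    [Field k] [Ring A] [Algebra k A] [Quiver.{w} V] [Fintype V]
    (P : MonomialPresentation k A V) {i j l : V}
    (p : Quiver.Path i j) (q : Quiver.Path l i) (h : P.PerfectPair p q) :
    ∃ θ : (Submodule.span Aᵐᵒᵖ ({P.ι q} : Set A)) →ₗ[Aᵐᵒᵖ]
        ((Submodule.span A ({P.ι q} : Set A)) →ₗ[A] A),
      (∀ (x : A) (hx : P.ι q * x ∈ Submodule.span Aᵐᵒᵖ ({P.ι q} : Set A))
          (y : Submodule.span A ({P.ι q} : Set A)),
        θ ⟨P.ι q * x, hx⟩ y = (y : A) * x) ∧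
      Function.Bijective θ := by
  classical
  obtain ⟨hp1, hq1, hpz, hqz, hzqp, h6, h7⟩ := h
  set g := P.ι q with hg
  have hpg : P.ι p * g = 0 := by rw [hg, ← P.mul_comp]; exact (P.zero_iff _).2 hzqp
  have heg : P.ι (Quiver.Path.nil : Quiver.Path i i) * g = g := P.e_mul q
  set N := Submodule.span Aᵐᵒᵖ ({g} : Set A) with hN
  set M := Submodule.span A ({g} : Set A) with hM
  have hann : ∀ n : N, ∀ bb : A, bb * g = 0 → bb * (n : A) = 0 := by
    intro n bb hbb
    obtain ⟨a, ha⟩ := Submodule.mem_span_singleton.1 n.2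
    rw [← ha]
    show bb * (g * a.unop) = 0
    rw [← mul_assoc, hbb, zero_mul]
  have hch : ∀ m : M, ∃ a : A, a * g = (m : A) := by
    intro m
    obtain ⟨a, ha⟩ := Submodule.mem_span_singleton.1 m.2
    exact ⟨a, ha⟩
  choose ch hch' using hch
  have hgM : g ∈ M := Submodule.mem_span_singleton_self g
  set y₀ : M := ⟨g, hgM⟩ with hy₀
  let θf : N → (M →ₗ[A] A) := fun n =>
    { toFun := fun m => ch m * (n : A)
      map_add' := by
        intro m m'
        have h0 : (ch (m + m') - ch m - ch m') * g = 0 := by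
          rw [sub_mul, sub_mul, hch', hch', hch', Submodule.coe_add, sub_sub, sub_self]
        have h1 := hann n _ h0
        rw [sub_mul, sub_mul, sub_sub, sub_eq_zero] at h1
        exact h1
      map_smul' := by
        intro a m
        have h0 : (ch (a • m) - a * ch m) * g = 0 := by
          rw [sub_mul, hch', mul_assoc, hch', Submodule.coe_smul, smul_eq_mul, sub_self]
        have h1 := hann n _ h0
        rw [sub_mul, sub_eq_zero] at h1
        show ch (a • m) * (n : A) = a * (ch m * (n : A))
        rw [h1, mul_assoc] }
  refine ⟨{ toFun := θf
            map_add' := by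
              intro n n'
              ext m
              show ch m * ((n : A) + (n' : A)) = ch m * (n : A) + ch m * (n' : A)
              rw [mul_add]
            map_smul' := by
              intro a n
              ext m
              show ch m * ((n : A) * a.unop) = (ch m * (n : A)) * a.unop
              rw [mul_assoc] }, ?_, ?_, ?_⟩
  · intro x hx y
    show ch y * (g * x) = (y : A) * x
    rw [← mul_assoc, hch']
  · intro n₁ n₂ he
    have hfix : ∀ n : N, ch y₀ * (n : A) = (n : A) := by
      intro n
      obtain ⟨a, ha⟩ := Submodule.mem_span_singleton.1 n.2
      rw [← ha]
      show ch y₀ * (g * a.unop) = g * a.unop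
      rw [← mul_assoc, hch' y₀]
    have h := congrArg (fun f => f y₀) he
    have h' : ch y₀ * (n₁ : A) = ch y₀ * (n₂ : A) := h
    rw [hfix n₁, hfix n₂] at h'
    exact Subtype.ext h'
  · intro f
    set c := f y₀ with hc
    have h1 : P.ι (Quiver.Path.nil : Quiver.Path i i) * c = c := by
      have hz : (P.ι (Quiver.Path.nil : Quiver.Path i i)) • y₀ = y₀ := by
        apply Subtype.ext
        show P.ι (Quiver.Path.nil : Quiver.Path i i) * g = g
        exact heg
      rw [← smul_eq_mul, hc, ← map_smul, hz]
    have h2 : P.ι p * c = 0 := by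
      have hz : (P.ι p) • y₀ = (0 : M) := by
        apply Subtype.ext
        show P.ι p * g = 0
        exact hpg
      rw [← smul_eq_mul, hc, ← map_smul, hz, map_zero]
    have hcN : c ∈ N := P.key p q h6 c h1 h2
    refine ⟨⟨c, hcN⟩, ?_⟩
    ext m
    show ch m * c = f m
    have hm : (ch m) • y₀ = m := by
      apply Subtype.ext
      show ch m * g = (m : A)
      exact hch' m
    rw [← smul_eq_mul, hc, ← map_smul, hm]
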